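/- For every i ≥ 1 and all f₁,…,f_i ∈ A, one has f₁·d(f₂·d(⋯ f_{i−1}·d(f_i) ⋯)) = Σ_{w ∈ K_i} c_w · d^{w₁}(f₁)·d^{w₂}(f₂)·⋯·d^{w_i}(f_i), where d^m is the m-th iterate of d. -/

import Mathlib

/-- The nested expression `f₁·d(f₂·d(⋯ f_{i−1}·d(f_i) ⋯))` attached to a list
`[f₁, …, f_i]` (equal to `1` on the empty list, and to `f₁` on a singleton). -/
def nest {A : Type*} [CommRing A] (d : A → A) : List A → A
  | [] => 1
  | [x] => x
  | x :: y :: l => x * d (nest d (y :: l))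

/-- `K_i`: words `w = w₁⋯w_i` of natural numbers (indexed here by `Fin i`, so `w j`
is the `(j+1)`-st letter) with `w₁+⋯+w_j ≤ j−1` for all `1 ≤ j < i` and
`w₁+⋯+w_i = i−1`. -/
def IsKWord (i : ℕ) (w : Fin i → ℕ) : Prop :=
  (∀ j : Fin i, (j : ℕ) + 1 < i →
    (∑ t ∈ Finset.univ.filter (fun t : Fin i => t ≤ j), w t) ≤ (j : ℕ)) ∧
  (∑ t, w t) = i - 1

/-- The coefficient `c_w = ∏_j C(d_j + w_j, w_j)` where
`d_j = j − 1 − (w₁ + ⋯ + w_j)`. -/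
def kCoeff (i : ℕ) (w : Fin i → ℕ) : ℕ :=
  ∏ j : Fin i,
    Nat.choose
      ((j : ℕ) - (∑ t ∈ Finset.univ.filter (fun t : Fin i => t ≤ j), w t) + w j)
      (w j)

/-- partial sum -/
def PS {i : ℕ} (u : Fin i → ℕ) (t : Fin i) : ℕ :=
  ∑ s ∈ Finset.univ.filter (fun s : Fin i => s ≤ t), u s

lemma PS_le_total {i : ℕ} (u : Fin i → ℕ) (t : Fin i) : PS u t ≤ ∑ s, u s :=
  Finset.sum_le_sum_of_subset (Finset.filter_subset _ _)

lemma le_PS {i : ℕ} (u : Fin i → ℕ) {j t : Fin i} (h : j ≤ t) : u j ≤ PS u t :=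
  Finset.single_le_sum (fun _ _ => Nat.zero_le _)
    (by simp [Finset.mem_filter, h])

lemma PS_succ {i : ℕ} (u : Fin i → ℕ) (a b : Fin i) (hab : (b : ℕ) = (a : ℕ) + 1) :
    PS u b = PS u a + u b := by
  have hfil : Finset.univ.filter (fun s : Fin i => s ≤ b)
      = insert b (Finset.univ.filter (fun s : Fin i => s ≤ a)) := by
    ext s
    simp only [Finset.mem_insert, Finset.mem_filter, Finset.mem_univ, true_and, Fin.le_def,
      Fin.ext_iff]
    omega
  have hb : b ∉ Finset.univ.filter (fun s : Fin i => s ≤ a) := by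
    simp only [Finset.mem_filter, Finset.mem_univ, true_and, Fin.le_def, hab]
    omega
  rw [PS, hfil, Finset.sum_insert hb, PS, add_comm]

lemma PS_update_sub {i : ℕ} (u : Fin i → ℕ) (j t : Fin i) (hj : u j ≠ 0) :
    PS (Function.update u j (u j - 1)) t = PS u t - (if j ≤ t then 1 else 0) := by
  classical
  by_cases h : j ≤ t
  · have hjmem : j ∈ Finset.univ.filter (fun s : Fin i => s ≤ t) := by simp [h]
    rw [PS, Finset.sum_update_of_mem hjmem]
    have h2 : u j + ∑ s ∈ (Finset.univ.filter (fun s : Fin i => s ≤ t)).erase j, u s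
        = PS u t := Finset.add_sum_erase _ _ hjmem
    simp only [Finset.sdiff_singleton_eq_erase, if_pos h]
    omega
  · rw [if_neg h]
    refine Finset.sum_congr rfl (fun s hs => ?_)
    have : s ≠ j := by
      rintro rfl; exact h (Finset.mem_filter.mp hs).2
    simp [Function.update_of_ne this]

lemma PS_update_add {i : ℕ} (u : Fin i → ℕ) (j t : Fin i) :
    PS (Function.update u j (u j + 1)) t = PS u t + (if j ≤ t then 1 else 0) := by
  classical
  by_cases h : j ≤ t
  · have hjmem : j ∈ Finset.univ.filter (fun s : Fin i => s ≤ t) := by simp [h]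
    rw [PS, Finset.sum_update_of_mem hjmem]
    have h2 : u j + ∑ s ∈ (Finset.univ.filter (fun s : Fin i => s ≤ t)).erase j, u s
        = PS u t := Finset.add_sum_erase _ _ hjmem
    simp only [Finset.sdiff_singleton_eq_erase, if_pos h]
    omega
  · rw [if_neg h]
    refine Finset.sum_congr rfl (fun s hs => ?_)
    have : s ≠ j := by
      rintro rfl; exact h (Finset.mem_filter.mp hs).2
    simp [Function.update_of_ne this]

lemma sum_update_sub {i : ℕ} (u : Fin i → ℕ) (j : Fin i) (hj : u j ≠ 0) :
    ∑ t, Function.update u j (u j - 1) t = (∑ t, u t) - 1 := by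
  classical
  rw [Finset.sum_update_of_mem (Finset.mem_univ j)]
  have h2 : u j + ∑ s ∈ Finset.univ.erase j, u s = ∑ s, u s :=
    Finset.add_sum_erase _ _ (Finset.mem_univ j)
  simp only [Finset.sdiff_singleton_eq_erase]
  omega

lemma sum_update_add {i : ℕ} (u : Fin i → ℕ) (j : Fin i) :
    ∑ t, Function.update u j (u j + 1) t = (∑ t, u t) + 1 := by
  classical
  rw [Finset.sum_update_of_mem (Finset.mem_univ j)]
  have h2 : u j + ∑ s ∈ Finset.univ.erase j, u s = ∑ s, u s :=
    Finset.add_sum_erase _ _ (Finset.mem_univ j)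
  simp only [Finset.sdiff_singleton_eq_erase]
  omega

lemma isKWord_def (i : ℕ) (w : Fin i → ℕ) :
    IsKWord i w ↔ ((∀ j : Fin i, (j : ℕ) + 1 < i → PS w j ≤ (j : ℕ)) ∧ (∑ t, w t) = i - 1) :=
  Iff.rfl

lemma kCoeff_def (i : ℕ) (w : Fin i → ℕ) :
    kCoeff i w = ∏ j : Fin i, Nat.choose ((j : ℕ) - PS w j + w j) (w j) := rfl

lemma PS_cons_zero {i : ℕ} (u : Fin i → ℕ) :
    PS (Fin.cons 0 u) 0 = 0 := by
  rw [PS]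
  have : Finset.univ.filter (fun s : Fin (i+1) => s ≤ 0) = {0} := by
    ext s; simp [Fin.le_zero_iff]
  simp [this]

lemma PS_cons_succ {i : ℕ} (u : Fin i → ℕ) (t : Fin i) :
    PS (Fin.cons 0 u) t.succ = PS u t := by
  rw [PS, PS, Finset.sum_filter, Finset.sum_filter, Fin.sum_univ_succ]
  simp only [Fin.cons_zero, Fin.cons_succ, Fin.succ_le_succ_iff]
  simp

lemma sum_cons_zero {i : ℕ} (u : Fin i → ℕ) :
    ∑ s, Fin.cons 0 u s = ∑ t, u t := by
  rw [Fin.sum_univ_succ]; simp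

lemma isK_cons_iff {i : ℕ} (u : Fin i → ℕ) :
    IsKWord (i+1) (Fin.cons 0 u) ↔
      ((∀ t : Fin i, (t : ℕ) + 1 < i → PS u t ≤ (t : ℕ) + 1) ∧ (∑ t, u t) = i) := by
  rw [isKWord_def]
  constructor
  · rintro ⟨h1, h2⟩
    refine ⟨fun t ht => ?_, ?_⟩
    · have := h1 t.succ (by simpa using by omega)
      rw [PS_cons_succ] at this
      simpa using this
    · rw [sum_cons_zero] at h2; omega
  · rintro ⟨h1, h2⟩
    refine ⟨fun j hj => ?_, ?_⟩
    · induction j using Fin.cases with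
      | zero => rw [PS_cons_zero]; exact Nat.zero_le _
      | succ t =>
        rw [PS_cons_succ]
        have ht : (t : ℕ) + 1 + 1 < i + 1 := by simpa using hj
        exact h1 t (by omega)
    · rw [sum_cons_zero, h2]; omega

lemma isK_apply_zero {i : ℕ} (hi : 1 ≤ i) (w : Fin (i+1) → ℕ) (hw : IsKWord (i+1) w) :
    w 0 = 0 := by
  have h := hw.1 0 (by simp only [Fin.val_zero]; omega)
  have : Finset.univ.filter (fun s : Fin (i+1) => s ≤ 0) = {0} := by
    ext s; simp [Fin.le_zero_iff]
  rw [this] at h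
  simpa using h

lemma split3 {i : ℕ} (h : Fin i → ℕ) (κ : Fin i) :
    ∏ t, h t = (∏ t ∈ Finset.univ.filter (· < κ), h t) * h κ *
      ∏ t ∈ Finset.univ.filter (κ < ·), h t := by
  classical
  rw [← Finset.prod_filter_mul_prod_filter_not Finset.univ (· < κ) h]
  have : Finset.univ.filter (fun t => ¬ t < κ) = insert κ (Finset.univ.filter (κ < ·)) := by
    ext t
    simp only [Finset.mem_filter, Finset.mem_univ, true_and, Finset.mem_insert, not_lt]
    constructor
    · intro ht; rcases eq_or_lt_of_le ht with h' | h'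
      · exact Or.inl h'.symm
      · exact Or.inr h'
    · rintro (rfl | h'); · exact le_refl _
      · exact le_of_lt h'
  rw [this, Finset.prod_insert (by simp), ← mul_assoc]

def Gf {i : ℕ} (u : Fin i → ℕ) (t : Fin i) : ℕ :=
  Nat.choose ((t : ℕ) + 1 - PS u t + u t) (u t)

def Af {i : ℕ} (u : Fin i → ℕ) (t : Fin i) : ℕ :=
  Nat.choose ((t : ℕ) - PS u t + u t) (u t)

lemma kCoeff_cons {i : ℕ} (u : Fin i → ℕ) :
    kCoeff (i+1) (Fin.cons 0 u) = ∏ t, Gf u t := by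
  rw [kCoeff_def, Fin.prod_univ_succ]
  simp only [Fin.cons_zero, Nat.choose_zero_right, one_mul]
  refine Finset.prod_congr rfl (fun t _ => ?_)
  rw [PS_cons_succ]
  simp [Gf, Fin.val_succ]

lemma kCoeff_udec {i : ℕ} (u : Fin i → ℕ) (j : Fin i) (hj : u j ≠ 0) :
    kCoeff i (Function.update u j (u j - 1)) =
      (∏ t ∈ Finset.univ.filter (· < j), Af u t) *
        Nat.choose ((j : ℕ) - (PS u j - 1) + (u j - 1)) (u j - 1) *
        ∏ t ∈ Finset.univ.filter (j < ·), Gf u t := by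
  classical
  set v := Function.update u j (u j - 1) with hv
  rw [kCoeff_def, split3 _ j]
  congr 1
  · congr 1
    · refine Finset.prod_congr rfl (fun t ht => ?_)
      have htj : t < j := (Finset.mem_filter.mp ht).2
      have hne : t ≠ j := ne_of_lt htj
      have h1 : PS v t = PS u t := by
        rw [hv, PS_update_sub u j t hj, if_neg (not_le_of_gt htj), Nat.sub_zero]
      rw [h1, hv, Function.update_of_ne hne, Af]
    · have h1 : PS v j = PS u j - 1 := by
        rw [hv, PS_update_sub u j j hj, if_pos (le_refl j)]
      rw [h1, hv, Function.update_self]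
  · refine Finset.prod_congr rfl (fun t ht => ?_)
    have htj : j < t := (Finset.mem_filter.mp ht).2
    have hne : t ≠ j := (ne_of_lt htj).symm
    have h1 : PS v t = PS u t - 1 := by
      rw [hv, PS_update_sub u j t hj, if_pos (le_of_lt htj)]
    have hge : 1 ≤ PS u t := le_trans (Nat.one_le_iff_ne_zero.mpr hj) (le_PS u (le_of_lt htj))
    rw [h1, hv, Function.update_of_ne hne, Gf]
    congr 1
    omega

lemma PS_last {i : ℕ} (u : Fin (i+1) → ℕ) : PS u (Fin.last i) = ∑ t, u t := by
  rw [PS]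
  congr 1
  refine Finset.filter_true_of_mem (fun t _ => Fin.le_last t)

open Classical in
noncomputable def Qfun {i : ℕ} (u : Fin i → ℕ) (k : ℕ) : ℕ :=
  if ∀ t : Fin i, (t : ℕ) < k → PS u t ≤ (t : ℕ) then
    ∏ t : Fin i, (if (t : ℕ) < k then Af u t else Gf u t)
  else 0

open Classical in
noncomputable def termAt {i : ℕ} (u : Fin i → ℕ) (j : Fin i) : ℕ :=
  if u j ≠ 0 ∧ ∀ t : Fin i, t < j → PS u t ≤ (t : ℕ) then
    (∏ t ∈ Finset.univ.filter (· < j), Af u t) *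
      Nat.choose ((j : ℕ) - (PS u j - 1) + (u j - 1)) (u j - 1) *
      ∏ t ∈ Finset.univ.filter (j < ·), Gf u t
  else 0

lemma Q_zero {i : ℕ} (u : Fin i → ℕ) : Qfun u 0 = ∏ t, Gf u t := by
  rw [Qfun, if_pos (by omega)]
  exact Finset.prod_congr rfl (fun t _ => by rw [if_neg (by omega)])

lemma Q_top {i : ℕ} (hi : 1 ≤ i) (u : Fin i → ℕ) (HU2 : ∑ t, u t = i) :
    Qfun u i = 0 := by
  obtain ⟨m, rfl⟩ : ∃ m, i = m + 1 := ⟨i - 1, by omega⟩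
  rw [Qfun, if_neg]
  intro hc
  have h1 := hc (Fin.last m) (by simp)
  rw [PS_last, HU2] at h1
  simp at h1

lemma Q_step {i : ℕ} (u : Fin i → ℕ)
    (HU1 : ∀ t : Fin i, (t : ℕ) + 1 < i → PS u t ≤ (t : ℕ) + 1)
    (HU2 : ∑ t, u t = i) (k : ℕ) (hk : k < i) :
    Qfun u k = Qfun u (k+1) + termAt u ⟨k, hk⟩ := by
  classical
  set κ : Fin i := ⟨k, hk⟩ with hκ
  have hκv : (κ : ℕ) = k := rfl
  have hlt : ∀ t : Fin i, t < κ ↔ (t : ℕ) < k := fun t => Iff.rfl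
  by_cases hcond : ∀ t : Fin i, (t : ℕ) < k → PS u t ≤ (t : ℕ)
  · have hSκ : PS u κ ≤ k + 1 := by
      by_cases h : k + 1 < i
      · exact HU1 κ h
      · have hik : i = k + 1 := by omega
        calc PS u κ ≤ ∑ t, u t := PS_le_total u κ
        _ = k + 1 := by rw [HU2, hik]
    have hterm : termAt u κ = if u κ ≠ 0 then
        (∏ t ∈ Finset.univ.filter (· < κ), Af u t) *
          Nat.choose ((κ : ℕ) - (PS u κ - 1) + (u κ - 1)) (u κ - 1) *
          ∏ t ∈ Finset.univ.filter (κ < ·), Gf u t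
      else 0 := by
      rw [termAt]
      by_cases hu : u κ = 0
      · rw [if_neg (by simp [hu]), if_neg (by simp [hu])]
      · rw [if_pos ⟨hu, fun t ht => hcond t ht⟩, if_pos hu]
    by_cases hS : PS u κ ≤ k
    · have hcond' : ∀ t : Fin i, (t : ℕ) < k + 1 → PS u t ≤ (t : ℕ) := by
        intro t ht
        rcases Nat.lt_succ_iff_lt_or_eq.mp ht with h | h
        · exact hcond t h
        · have : t = κ := Fin.ext h
          rw [this]; exact hS
      rw [Qfun, if_pos hcond, Qfun, if_pos hcond']
      rw [split3 (fun t => if (t : ℕ) < k then Af u t else Gf u t) κ,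
          split3 (fun t => if (t : ℕ) < k + 1 then Af u t else Gf u t) κ]
      have e1 : ∀ t ∈ Finset.univ.filter (· < κ),
          (if (t : ℕ) < k then Af u t else Gf u t) = Af u t := by
        intro t ht
        exact if_pos ((Finset.mem_filter.mp ht).2)
      have e1' : ∀ t ∈ Finset.univ.filter (· < κ),
          (if (t : ℕ) < k + 1 then Af u t else Gf u t) = Af u t := by
        intro t ht
        exact if_pos (by have := (Finset.mem_filter.mp ht).2; omega)
      have e2 : ∀ t ∈ Finset.univ.filter (κ < ·),
          (if (t : ℕ) < k then Af u t else Gf u t) = Gf u t := by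
        intro t ht
        exact if_neg (by have := (Finset.mem_filter.mp ht).2; have : k < (t:ℕ) := this; omega)
      have e2' : ∀ t ∈ Finset.univ.filter (κ < ·),
          (if (t : ℕ) < k + 1 then Af u t else Gf u t) = Gf u t := by
        intro t ht
        exact if_neg (by have : k < (t:ℕ) := (Finset.mem_filter.mp ht).2; omega)
      rw [Finset.prod_congr rfl e1, Finset.prod_congr rfl e2,
          Finset.prod_congr rfl e1', Finset.prod_congr rfl e2']
      rw [if_neg (by omega : ¬ ((κ:ℕ) < k)), if_pos (by omega : (κ:ℕ) < k + 1)]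
      rw [hterm]
      by_cases hu : u κ = 0
      · rw [if_neg (by simp [hu]), add_zero]
        have : Gf u κ = Af u κ := by
          rw [Gf, Af, hu]
          simp
        rw [this]
      · rw [if_pos hu]
        obtain ⟨m, hm⟩ : ∃ m, u κ = m + 1 := ⟨u κ - 1, by omega⟩
        have hS1 : 1 ≤ PS u κ := le_trans (by omega) (le_PS u (le_refl κ))
        have hG : Gf u κ = Nat.choose ((k - PS u κ + u κ) + 1) (m + 1) := by
          rw [Gf, hm]
          congr 1
          omega
        have hA : Af u κ = Nat.choose (k - PS u κ + u κ) (m + 1) := by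
          rw [Af, hm]
        have hB : Nat.choose ((κ : ℕ) - (PS u κ - 1) + (u κ - 1)) (u κ - 1)
            = Nat.choose (k - PS u κ + u κ) m := by
          rw [hm]
          congr 1
          omega
        rw [hG, hA, hB, Nat.choose_succ_succ]
        ring
    · have hSeq : PS u κ = k + 1 := by omega
      have hQ1 : Qfun u (k+1) = 0 := by
        rw [Qfun, if_neg]
        intro hc
        have := hc κ (by omega)
        omega
      have huκ : u κ ≠ 0 := by
        rcases Nat.eq_zero_or_pos k with rfl | hkpos
        · have : PS u κ = u κ := by
            rw [PS]
            have : Finset.univ.filter (fun s : Fin i => s ≤ κ) = {κ} := by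
              ext s
              simp only [Finset.mem_filter, Finset.mem_univ, true_and, Finset.mem_singleton,
                Fin.le_def, Fin.ext_iff]
              omega
            rw [this, Finset.sum_singleton]
          omega
        · set κ' : Fin i := ⟨k - 1, by omega⟩ with hκ'
          have hκ'v : (κ' : ℕ) = k - 1 := rfl
          have hps := PS_succ u κ' κ (by rw [hκv, hκ'v]; omega)
          have h3 := hcond κ' (by rw [hκ'v]; omega)
          rw [hκ'v] at h3
          omega
      have hQ0 : Qfun u k = (∏ t ∈ Finset.univ.filter (· < κ), Af u t) * Gf u κ *
          ∏ t ∈ Finset.univ.filter (κ < ·), Gf u t := by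
        rw [Qfun, if_pos hcond, split3 (fun t => if (t : ℕ) < k then Af u t else Gf u t) κ]
        congr 1
        · congr 1
          · exact Finset.prod_congr rfl (fun t ht => if_pos ((Finset.mem_filter.mp ht).2))
          · exact if_neg (by omega)
        · exact Finset.prod_congr rfl (fun t ht =>
            if_neg (by have : k < (t:ℕ) := (Finset.mem_filter.mp ht).2; omega))
      rw [hQ0, hQ1, zero_add, hterm, if_pos huκ]
      have hGκ : Gf u κ = 1 := by
        rw [Gf, hκ]
        simp only []
        rw [show (κ:ℕ) + 1 - PS u κ + u κ = u κ by omega, Nat.choose_self]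
      have hBκ : Nat.choose ((κ : ℕ) - (PS u κ - 1) + (u κ - 1)) (u κ - 1) = 1 := by
        rw [show (κ:ℕ) - (PS u κ - 1) + (u κ - 1) = u κ - 1 by omega, Nat.choose_self]
      rw [hGκ, hBκ]
  · have himp : ¬ ∀ t : Fin i, (t : ℕ) < k + 1 → PS u t ≤ (t : ℕ) := by
      intro hc
      exact hcond (fun t ht => hc t (by omega))
    rw [Qfun, if_neg hcond, Qfun, if_neg himp, termAt,
      if_neg (by rintro ⟨-, hc⟩; exact hcond (fun t ht => hc t ht))]

lemma telescope {i : ℕ} (hi : 1 ≤ i) (u : Fin i → ℕ)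
    (HU1 : ∀ t : Fin i, (t : ℕ) + 1 < i → PS u t ≤ (t : ℕ) + 1)
    (HU2 : ∑ t, u t = i) :
    ∏ t, Gf u t = ∑ j, termAt u j := by
  classical
  have main : ∀ m, m ≤ i →
      Qfun u 0 = (∑ j ∈ Finset.univ.filter (fun j : Fin i => (j : ℕ) < m), termAt u j)
        + Qfun u m := by
    intro m
    induction m with
    | zero =>
      intro _
      have : Finset.univ.filter (fun j : Fin i => (j : ℕ) < 0) = ∅ := by
        apply Finset.filter_false_of_mem; intro j _; omega
      rw [this, Finset.sum_empty, zero_add]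
    | succ m ih =>
      intro hm
      have hmi : m < i := by omega
      have hfil : Finset.univ.filter (fun j : Fin i => (j : ℕ) < m + 1)
          = insert (⟨m, hmi⟩ : Fin i) (Finset.univ.filter (fun j : Fin i => (j : ℕ) < m)) := by
        ext j
        simp only [Finset.mem_filter, Finset.mem_univ, true_and, Finset.mem_insert, Fin.ext_iff]
        omega
      rw [hfil, Finset.sum_insert (by simp), ih (by omega), Q_step u HU1 HU2 m hmi]
      ring
  have h1 := main i (le_refl i)
  have hfil : Finset.univ.filter (fun j : Fin i => (j : ℕ) < i) = Finset.univ := by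
    refine Finset.filter_true_of_mem (fun j _ => j.isLt)
  rw [hfil, Q_top hi u HU2, add_zero, Q_zero] at h1
  exact h1

lemma fiber_iff {i : ℕ} (u : Fin i → ℕ)
    (HU1 : ∀ t : Fin i, (t : ℕ) + 1 < i → PS u t ≤ (t : ℕ) + 1)
    (HU2 : ∑ t, u t = i) (j : Fin i) :
    (u j ≠ 0 ∧ IsKWord i (Function.update u j (u j - 1))) ↔
      (u j ≠ 0 ∧ ∀ t : Fin i, t < j → PS u t ≤ (t : ℕ)) := by
  constructor
  · rintro ⟨hj, hK⟩
    refine ⟨hj, fun t ht => ?_⟩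
    have h1 := (isKWord_def _ _).mp hK |>.1 t (by
      have : (t : ℕ) < (j : ℕ) := ht
      have := j.isLt
      omega)
    rw [PS_update_sub u j t hj, if_neg (not_le_of_gt ht), Nat.sub_zero] at h1
    exact h1
  · rintro ⟨hj, hpre⟩
    refine ⟨hj, (isKWord_def _ _).mpr ⟨fun t ht => ?_, ?_⟩⟩
    · rw [PS_update_sub u j t hj]
      by_cases h : j ≤ t
      · rw [if_pos h]
        have := HU1 t ht
        have h1 : 1 ≤ PS u t := le_trans (by omega) (le_PS u h)
        omega
      · rw [if_neg h, Nat.sub_zero]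
        exact hpre t (lt_of_not_ge h)
    · rw [sum_update_sub u j hj, HU2]

open Classical in
lemma key {i : ℕ} (hi : 1 ≤ i) (u : Fin i → ℕ)
    (hu : IsKWord (i+1) (Fin.cons 0 u)) :
    kCoeff (i+1) (Fin.cons 0 u) =
      ∑ j ∈ Finset.univ.filter
          (fun j : Fin i => u j ≠ 0 ∧ IsKWord i (Function.update u j (u j - 1))),
        kCoeff i (Function.update u j (u j - 1)) := by
  obtain ⟨HU1, HU2⟩ := (isK_cons_iff u).mp hu
  rw [kCoeff_cons, telescope hi u HU1 HU2]
  have h1 : ∀ j : Fin i, termAt u j =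
      if u j ≠ 0 ∧ IsKWord i (Function.update u j (u j - 1)) then
        kCoeff i (Function.update u j (u j - 1)) else 0 := by
    intro j
    by_cases h : u j ≠ 0 ∧ IsKWord i (Function.update u j (u j - 1))
    · rw [if_pos h, termAt, if_pos ((fiber_iff u HU1 HU2 j).mp h),
        kCoeff_udec u j h.1]
    · rw [if_neg h, termAt, if_neg (fun hc => h ((fiber_iff u HU1 HU2 j).mpr hc))]
  rw [Finset.sum_congr rfl (fun j _ => h1 j), ← Finset.sum_filter]

lemma bump_isK {i : ℕ} (hi : 1 ≤ i) (v : Fin i → ℕ) (hv : IsKWord i v) (j : Fin i) :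
    IsKWord (i+1) (Fin.cons 0 (Function.update v j (v j + 1))) := by
  rw [isK_cons_iff]
  constructor
  · intro t ht
    rw [PS_update_add]
    have := (isKWord_def i v).mp hv |>.1 t ht
    by_cases h : j ≤ t
    · rw [if_pos h]; omega
    · rw [if_neg h]; omega
  · rw [sum_update_add]
    have := (isKWord_def i v).mp hv |>.2
    omega

lemma udec_bump {i : ℕ} (v : Fin i → ℕ) (j : Fin i) :
    Function.update (Function.update v j (v j + 1)) j
      (Function.update v j (v j + 1) j - 1) = v := by
  funext t
  by_cases h : t = j
  · subst h; simp
  · simp [Function.update_of_ne h]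

lemma bump_udec {i : ℕ} (u : Fin i → ℕ) (j : Fin i) (h : u j ≠ 0) :
    Function.update (Function.update u j (u j - 1)) j
      (Function.update u j (u j - 1) j + 1) = u := by
  funext t
  by_cases ht : t = j
  · subst ht; simp; omega
  · simp [Function.update_of_ne ht]

open Classical in
noncomputable def KF (i : ℕ) : Finset (Fin i → ℕ) :=
  (Finset.Icc 0 (fun _ => i)).filter (IsKWord i)

lemma mem_KF {i : ℕ} (w : Fin i → ℕ) : w ∈ KF i ↔ IsKWord i w := by
  classical
  rw [KF]
  simp only [Finset.mem_filter, Finset.mem_Icc, and_iff_right_iff_imp]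
  intro hw
  refine ⟨fun t => Nat.zero_le _, fun t => ?_⟩
  have h1 : w t ≤ ∑ s, w s :=
    Finset.single_le_sum (fun _ _ => Nat.zero_le _) (Finset.mem_univ t)
  have h2 := hw.2
  rw [h2] at h1
  exact le_trans h1 (Nat.sub_le i 1)

section Derivation

variable {A : Type*} [CommRing A] (d : A → A)

lemma d_one (hleib : ∀ x y : A, d (x * y) = d x * y + x * d y) : d 1 = 0 := by
  have h := hleib 1 1
  rw [mul_one, mul_one, one_mul] at h
  exact (left_eq_add.mp h)

lemma d_prod (hleib : ∀ x y : A, d (x * y) = d x * y + x * d y)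
    {ι : Type*} [DecidableEq ι] (s : Finset ι) (g : ι → A) :
    d (∏ j ∈ s, g j) = ∑ j ∈ s, d (g j) * ∏ t ∈ s.erase j, g t := by
  induction s using Finset.induction_on with
  | empty => simp [d_one d hleib]
  | @insert a s ha ih =>
    rw [Finset.prod_insert ha, hleib, ih, Finset.sum_insert ha, Finset.erase_insert ha,
      Finset.mul_sum]
    congr 1
    refine Finset.sum_congr rfl fun j hj => ?_
    have hja : j ≠ a := fun h => ha (h ▸ hj)
    rw [Finset.erase_insert_of_ne (Ne.symm hja), Finset.prod_insert
      (fun hmem => ha (Finset.mem_of_mem_erase hmem))]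
    ring

lemma nest_cons (x : A) (l : List A) (h : l ≠ []) :
    nest d (x :: l) = x * d (nest d l) := by
  cases l with
  | nil => exact absurd rfl h
  | cons y l => rfl

end Derivation

theorem aux_main {A : Type*} [CommRing A] (d : A → A)
    (hadd : ∀ x y : A, d (x + y) = d x + d y)
    (hleib : ∀ x y : A, d (x * y) = d x * y + x * d y) :
    ∀ (i : ℕ), 1 ≤ i → ∀ f : Fin i → A,
      nest d (List.ofFn f) = ∑ w ∈ KF i, kCoeff i w • ∏ j : Fin i, d^[w j] (f j) := by
  intro i hi
  induction i, hi using Nat.le_induction with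
  | base =>
    intro f
    have h1 : List.ofFn f = [f 0] := by
      simp [List.ofFn_succ]
    have h2 : KF 1 = {fun _ => 0} := by
      ext w
      rw [mem_KF, Finset.mem_singleton, isKWord_def]
      constructor
      · rintro ⟨-, hs⟩
        rw [Fin.sum_univ_one] at hs
        funext t
        have ht : t = 0 := Subsingleton.elim t 0
        rw [ht]
        simpa using hs
      · rintro rfl
        exact ⟨fun j hj => by omega, by simp⟩
    rw [h1, h2, Finset.sum_singleton]
    have h3 : kCoeff 1 (fun _ => (0:ℕ)) = 1 := by
      simp [kCoeff]
    rw [h3, one_smul]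
    simp [nest]
  | succ i hi ih =>
    intro f
    classical
    set g : Fin i → A := fun t => f t.succ with hg
    have hne : List.ofFn g ≠ [] := by
      intro h
      have h2 := congrArg List.length h
      simp at h2
      omega
    have hof : List.ofFn f = f 0 :: List.ofFn g := by
      rw [List.ofFn_succ]
    rw [hof, nest_cons d _ _ hne, ih g]
    have hD : d (∑ v ∈ KF i, kCoeff i v • ∏ t, d^[v t] (g t))
        = ∑ v ∈ KF i, d (kCoeff i v • ∏ t, d^[v t] (g t)) :=
      map_sum (AddMonoidHom.mk' d hadd) _ _
    have hDn : ∀ (n : ℕ) (x : A), d (n • x) = n • d x := fun n x =>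
      map_nsmul (AddMonoidHom.mk' d hadd) n x
    have hdprod : ∀ v : Fin i → ℕ,
        d (∏ t, d^[v t] (g t))
          = ∑ j, ∏ t, d^[Function.update v j (v j + 1) t] (g t) := by
      intro v
      rw [d_prod d hleib Finset.univ (fun t => d^[v t] (g t))]
      refine Finset.sum_congr rfl fun j _ => ?_
      rw [← Finset.mul_prod_erase Finset.univ
          (fun t => d^[Function.update v j (v j + 1) t] (g t)) (Finset.mem_univ j)]
      congr 1
      · rw [Function.update_self, Function.iterate_succ_apply' d (v j) (g j)]
      · exact Finset.prod_congr rfl fun t ht =>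
          by rw [Function.update_of_ne (Finset.ne_of_mem_erase ht)]
    rw [hD, Finset.mul_sum]
    have hL : ∀ v ∈ KF i, f 0 * d (kCoeff i v • ∏ t, d^[v t] (g t))
        = ∑ j : Fin i, kCoeff i v •
            (f 0 * ∏ t, d^[Function.update v j (v j + 1) t] (g t)) := by
      intro v _
      rw [hDn, hdprod v, Finset.smul_sum, Finset.mul_sum]
      exact Finset.sum_congr rfl fun j _ => mul_smul_comm _ _ _
    rw [Finset.sum_congr rfl hL]
    set fib : (Fin (i+1) → ℕ) → Finset (Fin i) := fun w =>
      Finset.univ.filter (fun j : Fin i => Fin.tail w j ≠ 0 ∧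
        IsKWord i (Function.update (Fin.tail w) j (Fin.tail w j - 1))) with hfib
    have hR : ∀ w ∈ KF (i+1), kCoeff (i+1) w • ∏ s : Fin (i+1), d^[w s] (f s)
        = ∑ j ∈ fib w,
            kCoeff i (Function.update (Fin.tail w) j (Fin.tail w j - 1)) •
              (f 0 * ∏ t : Fin i, d^[Fin.tail w t] (g t)) := by
      intro w hw
      have hK := (mem_KF w).mp hw
      have hw0 : w 0 = 0 := isK_apply_zero hi w hK
      have hprod : ∏ s : Fin (i+1), d^[w s] (f s)
          = f 0 * ∏ t : Fin i, d^[Fin.tail w t] (g t) := by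
        rw [Fin.prod_univ_succ, hw0, Function.iterate_zero_apply]
        rfl
      have hcons0 : Fin.cons 0 (Fin.tail w) = w := by
        rw [← hw0]; exact Fin.cons_self_tail w
      have hkey := key hi (Fin.tail w) (by rw [hcons0]; exact hK)
      have hco : kCoeff (i+1) w = ∑ j ∈ fib w,
          kCoeff i (Function.update (Fin.tail w) j (Fin.tail w j - 1)) := by
        rw [← hcons0, hkey]
        rfl
      rw [hprod, hco, Finset.sum_smul]
    rw [Finset.sum_congr rfl hR]
    have hbij : ∑ p ∈ (KF i).sigma (fun _ => (Finset.univ : Finset (Fin i))),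
          (kCoeff i p.1 •
            (f 0 * ∏ t, d^[Function.update p.1 p.2 (p.1 p.2 + 1) t] (g t)))
        = ∑ q ∈ (KF (i+1)).sigma fib,
          (kCoeff i (Function.update (Fin.tail q.1) q.2 (Fin.tail q.1 q.2 - 1)) •
            (f 0 * ∏ t : Fin i, d^[Fin.tail q.1 t] (g t))) := by
      refine Finset.sum_nbij'
        (i := fun p => ⟨Fin.cons 0 (Function.update p.1 p.2 (p.1 p.2 + 1)), p.2⟩)
        (j := fun q => ⟨Function.update (Fin.tail q.1) q.2 (Fin.tail q.1 q.2 - 1), q.2⟩)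
        ?_ ?_ ?_ ?_ ?_
      · rintro ⟨v, j⟩ hp
        have hv : IsKWord i v := (mem_KF v).mp (Finset.mem_sigma.mp hp).1
        rw [Finset.mem_sigma]
        constructor
        · exact (mem_KF _).mpr (bump_isK hi v hv j)
        · rw [hfib]
          simp only [Fin.tail_cons, Finset.mem_filter, Finset.mem_univ, true_and]
          refine ⟨by rw [Function.update_self]; omega, ?_⟩
          rw [udec_bump]
          exact hv
      · rintro ⟨w, j⟩ hq
        rw [Finset.mem_sigma] at hq
        obtain ⟨hw, hj⟩ := hq
        rw [hfib] at hj
        simp only [Finset.mem_filter, Finset.mem_univ, true_and] at hj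
        rw [Finset.mem_sigma]
        exact ⟨(mem_KF _).mpr hj.2, Finset.mem_univ j⟩
      · rintro ⟨v, j⟩ hp
        simp only [Fin.tail_cons]
        exact congrArg (fun x => (⟨x, j⟩ : (_ : Fin i → ℕ) × Fin i)) (udec_bump v j)
      · rintro ⟨w, j⟩ hq
        rw [Finset.mem_sigma] at hq
        obtain ⟨hw, hj⟩ := hq
        rw [hfib] at hj
        simp only [Finset.mem_filter, Finset.mem_univ, true_and] at hj
        have hw0 : w 0 = 0 := isK_apply_zero hi w ((mem_KF w).mp hw)
        have h1 : Fin.cons 0 (Function.update (Function.update (Fin.tail w) j (Fin.tail w j - 1)) j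
            (Function.update (Fin.tail w) j (Fin.tail w j - 1) j + 1)) = w := by
          rw [bump_udec (Fin.tail w) j hj.1, ← hw0]
          exact Fin.cons_self_tail w
        exact congrArg (fun x => (⟨x, j⟩ : (_ : Fin (i+1) → ℕ) × Fin i)) h1
      · rintro ⟨v, j⟩ hp
        simp only [Fin.tail_cons, udec_bump]
    rw [Finset.sum_sigma', Finset.sum_sigma']
    exact hbij

/-- `f₁·d(f₂·d(⋯ f_{i−1}·d(f_i)⋯)) = Σ_{w ∈ K_i} c_w·d^{w₁}(f₁)⋯d^{w_i}(f_i)`. -/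
theorem nest_eq_sum_kwords {A : Type*} [CommRing A] (d : A → A)
    (hadd : ∀ x y : A, d (x + y) = d x + d y)
    (hleib : ∀ x y : A, d (x * y) = d x * y + x * d y)
    (i : ℕ) (hi : 1 ≤ i) (f : Fin i → A) :
    nest d (List.ofFn f) =
      ∑ᶠ w ∈ {w : Fin i → ℕ | IsKWord i w},
        kCoeff i w • ∏ j : Fin i, d^[w j] (f j) := by
  have hset : {w : Fin i → ℕ | IsKWord i w} = ↑(KF i) := by
    ext w
    simp [mem_KF]
  rw [hset, finsum_mem_coe_finset]
  exact aux_main d hadd hleib i hi f
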